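/- Let ζ : [0,∞) → ℝ be continuous, C > 0, α ≥ 0, and suppose ξ : [0,∞) → ℝ^k is continuous and satisfies ‖ξ(t)‖ ≤ C e^{∫₀ᵗ ζ} ‖ξ(0)‖ + C α ∫₀ᵗ e^{∫_τ^t ζ} ‖ξ(τ)‖ dτ for all t ≥ 0. Then ‖ξ(t)‖ ≤ C ‖ξ(0)‖ exp(∫₀ᵗ (ζ(σ) + C α) dσ) for all t ≥ 0. Consequently, if limsup_{t→∞} (1/t)∫₀ᵗ ζ = λ_M and λ_M + Cα < 0, then ξ(t) → 0 exponentially. -/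
import Mathlib


open Filter intervalIntegral MeasureTheory

/-- Key estimate: if `‖ξ(t)‖ ≤ C e^{∫₀ᵗ ζ}‖ξ(0)‖ + Cα ∫₀ᵗ e^{∫_τ^t ζ}‖ξ(τ)‖dτ`,
then `‖ξ(t)‖ ≤ C‖ξ(0)‖ exp(∫₀ᵗ (ζ + Cα))`; consequently if
`limsup (1/t)∫₀ᵗ ζ = λ_M` and `λ_M + Cα < 0` then `ξ → 0` exponentially. -/
theorem comparison_estimate {k : ℕ} (ζ : ℝ → ℝ) (C α lamM : ℝ)
    (ξ : ℝ → EuclideanSpace ℝ (Fin k))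
    (hζ : Continuous ζ) (hC : 0 < C) (hα : 0 ≤ α) (hξ : Continuous ξ)
    (hineq : ∀ t, 0 ≤ t →
      ‖ξ t‖ ≤ C * Real.exp (∫ σ in (0:ℝ)..t, ζ σ) * ‖ξ 0‖ +
        C * α * ∫ τ in (0:ℝ)..t, Real.exp (∫ σ in τ..t, ζ σ) * ‖ξ τ‖) :
    (∀ t, 0 ≤ t →
      ‖ξ t‖ ≤ C * ‖ξ 0‖ * Real.exp (∫ σ in (0:ℝ)..t, (ζ σ + C * α))) ∧
    (limsup (fun t => (1 / t) * ∫ σ in (0:ℝ)..t, ζ σ) atTop = lamM →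
      lamM + C * α < 0 →
      ∃ M > (0:ℝ), ∃ β < (0:ℝ), ∀ t, 0 ≤ t → ‖ξ t‖ ≤ M * Real.exp (β * t)) := by
  have hζint : ∀ a b : ℝ, IntervalIntegrable ζ MeasureTheory.volume a b :=
    fun a b => hζ.intervalIntegrable a b
  set I : ℝ → ℝ := fun t => ∫ σ in (0:ℝ)..t, ζ σ with hI
  have hIcont : Continuous I := intervalIntegral.continuous_primitive hζint 0
  set φ : ℝ → ℝ := fun τ => Real.exp (-(I τ)) * ‖ξ τ‖ with hφ
  have hφcont : Continuous φ := (Real.continuous_exp.comp hIcont.neg).mul hξ.norm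
  have hφint : ∀ a b : ℝ, IntervalIntegrable φ MeasureTheory.volume a b :=
    fun a b => hφcont.intervalIntegrable a b
  have hφnn : ∀ τ, 0 ≤ φ τ := fun τ => mul_nonneg (Real.exp_pos _).le (norm_nonneg _)
  set B : ℝ := C * ‖ξ 0‖ with hB
  have hBnn : 0 ≤ B := mul_nonneg hC.le (norm_nonneg _)
  set K : ℝ := C * α with hK
  have hKnn : 0 ≤ K := mul_nonneg hC.le hα
  -- key inequality for φ
  have key : ∀ t, 0 ≤ t → φ t ≤ B + K * ∫ τ in (0:ℝ)..t, φ τ := by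
    intro t ht
    have h1 := hineq t ht
    have h2 : Real.exp (-(I t)) * ‖ξ t‖ ≤
        Real.exp (-(I t)) * (C * Real.exp (I t) * ‖ξ 0‖ +
          C * α * ∫ τ in (0:ℝ)..t, Real.exp (∫ σ in τ..t, ζ σ) * ‖ξ τ‖) :=
      mul_le_mul_of_nonneg_left h1 (Real.exp_pos _).le
    have h3 : Real.exp (-(I t)) * (C * Real.exp (I t) * ‖ξ 0‖) = B := by
      rw [hB, show Real.exp (-(I t)) * (C * Real.exp (I t) * ‖ξ 0‖) =
          Real.exp (-(I t)) * Real.exp (I t) * (C * ‖ξ 0‖) by ring,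
        ← Real.exp_add, neg_add_cancel, Real.exp_zero, one_mul]
    have h4 : Real.exp (-(I t)) * ∫ τ in (0:ℝ)..t, Real.exp (∫ σ in τ..t, ζ σ) * ‖ξ τ‖
        = ∫ τ in (0:ℝ)..t, φ τ := by
      rw [← intervalIntegral.integral_const_mul]
      apply intervalIntegral.integral_congr
      intro τ _
      have hadd : I τ + (∫ σ in τ..t, ζ σ) = I t :=
        intervalIntegral.integral_add_adjacent_intervals (hζint 0 τ) (hζint τ t)
      simp only [hφ, ← mul_assoc, ← Real.exp_add]
      congr 2
      linarith
    calc φ t ≤ Real.exp (-(I t)) * (C * Real.exp (I t) * ‖ξ 0‖ +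
          C * α * ∫ τ in (0:ℝ)..t, Real.exp (∫ σ in τ..t, ζ σ) * ‖ξ τ‖) := h2
      _ = B + K * ∫ τ in (0:ℝ)..t, φ τ := by
          rw [mul_add, h3]
          rw [show Real.exp (-(I t)) * (C * α * ∫ τ in (0:ℝ)..t,
              Real.exp (∫ σ in τ..t, ζ σ) * ‖ξ τ‖) = C * α *
              (Real.exp (-(I t)) * ∫ τ in (0:ℝ)..t,
              Real.exp (∫ σ in τ..t, ζ σ) * ‖ξ τ‖) by ring, h4]
  -- Grönwall: φ t ≤ B * exp (K t)
  have gron : ∀ t, 0 ≤ t → φ t ≤ B * Real.exp (K * t) := by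
    intro t ht
    set Ψ : ℝ → ℝ := fun u => B + K * ∫ τ in (0:ℝ)..u, φ τ with hΨ
    have hΨcont : Continuous Ψ :=
      continuous_const.add (continuous_const.mul (intervalIntegral.continuous_primitive hφint 0))
    have hΨderiv : ∀ u, HasDerivAt Ψ (K * φ u) u := by
      intro u
      have := (intervalIntegral.integral_hasDerivAt_right (hφint 0 u)
        (hφcont.stronglyMeasurableAtFilter _ _) hφcont.continuousAt)
      exact (this.const_mul K).const_add B
    have hφΨ : ∀ u ∈ Set.Ico (0:ℝ) t, φ u ≤ Ψ u := fun u hu => key u hu.1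
    have hg := norm_le_gronwallBound_of_norm_deriv_right_le (f := Ψ) (f' := fun u => K * φ u)
      (δ := B) (K := K) (ε := 0) (a := 0) (b := t) hΨcont.continuousOn
      (fun u _ => (hΨderiv u).hasDerivWithinAt)
      (by simp [hΨ, Real.norm_eq_abs, abs_of_nonneg hBnn])
      (fun u hu => by
        have h1 : K * φ u ≤ K * |Ψ u| :=
          mul_le_mul_of_nonneg_left ((hφΨ u hu).trans (le_abs_self _)) hKnn
        calc ‖K * φ u‖ = K * φ u := by
              rw [Real.norm_eq_abs, abs_of_nonneg (mul_nonneg hKnn (hφnn u))]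
          _ ≤ K * |Ψ u| := h1
          _ = K * ‖Ψ u‖ + 0 := by rw [Real.norm_eq_abs]; ring)
    have hgt := hg t ⟨ht, le_refl t⟩
    rw [gronwallBound_ε0] at hgt
    have : φ t ≤ Ψ t := key t ht
    calc φ t ≤ Ψ t := this
      _ ≤ |Ψ t| := le_abs_self _
      _ ≤ B * Real.exp (K * (t - 0)) := hgt
      _ = B * Real.exp (K * t) := by ring_nf
  -- part 1
  have part1 : ∀ t, 0 ≤ t →
      ‖ξ t‖ ≤ C * ‖ξ 0‖ * Real.exp (∫ σ in (0:ℝ)..t, (ζ σ + C * α)) := by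
    intro t ht
    have hsplit : (∫ σ in (0:ℝ)..t, (ζ σ + C * α)) = I t + K * t := by
      rw [intervalIntegral.integral_add (hζint 0 t) intervalIntegrable_const,
        intervalIntegral.integral_const, smul_eq_mul, hK]
      ring
    have h1 : ‖ξ t‖ = Real.exp (I t) * φ t := by
      simp only [hφ, ← mul_assoc, ← Real.exp_add]
      rw [add_neg_cancel, Real.exp_zero, one_mul]
    rw [h1, hsplit, Real.exp_add]
    calc Real.exp (I t) * φ t ≤ Real.exp (I t) * (B * Real.exp (K * t)) :=
          mul_le_mul_of_nonneg_left (gron t ht) (Real.exp_pos _).le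
      _ = C * ‖ξ 0‖ * (Real.exp (I t) * Real.exp (K * t)) := by rw [hB]; ring
  refine ⟨part1, ?_⟩
  intro hlimsup hneg
  -- part 2
  have hlamM : lamM < 0 := by nlinarith
  set β : ℝ := (lamM + C * α) / 2 with hβ
  have hβneg : β < 0 := by simp [hβ]; linarith
  have hlamMβ : lamM < β - C * α := by rw [hβ]; linarith
  -- get eventual bound on the average
  have hev : ∀ᶠ t in atTop, (1 / t) * (I t) < β - C * α := by
    by_cases hb : IsBoundedUnder (· ≤ ·) atTop (fun t => (1 / t) * (I t))
    · exact eventually_lt_of_limsup_lt (by rw [hlimsup]; exact hlamMβ) hb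
    · exfalso
      have : limsup (fun t => (1 / t) * (I t)) atTop = sInf ∅ := by
        rw [limsup_eq]
        congr 1
        ext a
        simp only [Set.mem_setOf_eq, Set.mem_empty_iff_false, iff_false]
        intro h
        exact hb ⟨a, h⟩
      rw [Real.sInf_empty] at this
      rw [this] at hlimsup
      linarith [hlimsup]
  obtain ⟨T₀, hT₀⟩ := hev.exists_forall_of_atTop
  set T : ℝ := max T₀ 1 with hT
  have hT1 : (1:ℝ) ≤ T := le_max_right _ _
  have hTpos : 0 < T := lt_of_lt_of_le one_pos hT1
  -- bound on [0, T]
  have hcont2 : Continuous (fun t => ‖ξ t‖ * Real.exp (-(β * t))) :=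
    hξ.norm.mul (Real.continuous_exp.comp (continuous_const.mul continuous_id).neg)
  obtain ⟨u, _, hu⟩ := isCompact_Icc.exists_isMaxOn (Set.nonempty_Icc.2 hTpos.le)
    hcont2.continuousOn (s := Set.Icc (0:ℝ) T)
  set M₀ : ℝ := ‖ξ u‖ * Real.exp (-(β * u)) with hM₀
  set M : ℝ := max (M₀ + 1) (C * ‖ξ 0‖ + 1) with hM
  have hMpos : 0 < M := by
    have : 0 ≤ M₀ := mul_nonneg (norm_nonneg _) (Real.exp_pos _).le
    have h1 : (0:ℝ) < M₀ + 1 := by linarith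
    exact lt_of_lt_of_le h1 (le_max_left _ _)
  refine ⟨M, hMpos, β, hβneg, ?_⟩
  intro t ht
  rcases le_or_gt t T with hle | hgt
  · -- small t: use compact bound
    have hmem : t ∈ Set.Icc (0:ℝ) T := ⟨ht, hle⟩
    have := hu hmem
    have h1 : ‖ξ t‖ * Real.exp (-(β * t)) ≤ M₀ := this
    have h2 : ‖ξ t‖ ≤ M₀ * Real.exp (β * t) := by
      have h3 := mul_le_mul_of_nonneg_right h1 (Real.exp_pos (β * t)).le
      rwa [mul_assoc, ← Real.exp_add, neg_add_cancel, Real.exp_zero, mul_one] at h3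
    calc ‖ξ t‖ ≤ M₀ * Real.exp (β * t) := h2
      _ ≤ M * Real.exp (β * t) := by
          have : M₀ ≤ M := le_trans (by linarith) (le_max_left (M₀+1) _)
          exact mul_le_mul_of_nonneg_right this (Real.exp_pos _).le
  · -- large t
    have htT : T₀ ≤ t := le_trans (le_max_left _ _) hgt.le
    have htpos : 0 < t := lt_of_le_of_lt hTpos.le hgt
    have havg := hT₀ t htT
    have hIt : I t < (β - C * α) * t := by
      have h2 := mul_lt_mul_of_pos_right havg htpos
      rwa [one_div, inv_mul_eq_div, div_mul_cancel₀ _ htpos.ne'] at h2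
    have hexp : (∫ σ in (0:ℝ)..t, (ζ σ + C * α)) < β * t := by
      have hsplit : (∫ σ in (0:ℝ)..t, (ζ σ + C * α)) = I t + (C * α) * t := by
        rw [intervalIntegral.integral_add (hζint 0 t) intervalIntegrable_const,
          intervalIntegral.integral_const, smul_eq_mul]
        ring
      rw [hsplit]; nlinarith
    calc ‖ξ t‖ ≤ C * ‖ξ 0‖ * Real.exp (∫ σ in (0:ℝ)..t, (ζ σ + C * α)) := part1 t ht
      _ ≤ C * ‖ξ 0‖ * Real.exp (β * t) :=
          mul_le_mul_of_nonneg_left (Real.exp_le_exp.2 hexp.le)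
            (mul_nonneg hC.le (norm_nonneg _))
      _ ≤ M * Real.exp (β * t) := by
          have : C * ‖ξ 0‖ ≤ M := le_trans (by linarith) (le_max_right (M₀+1) _)
          exact mul_le_mul_of_nonneg_right this (Real.exp_pos _).le
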